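/- For polytropic index n₀ = 5 (i.e. Υ₀ = 5/6), the function Φ(U,V) = √U · V^{3/2} (U(8−9V) + 7V − 6) · (1−U)^{−3/2} (1−V)^{−5/2} is a first integral of the planar system: Φ(U(λ), V(λ)) is constant along every solution with values in the open square (0,1)². -/

import Mathlib

open Set

/-- The first integral `Φ(U,V) = √U·V^{3/2}(U(8−9V)+7V−6)·(1−U)^{−3/2}(1−V)^{−5/2}`
for the `n₀ = 5` compactified Newtonian system. -/
noncomputable def PhiFun (U V : ℝ) : ℝ :=
  Real.sqrt U * V ^ ((3 : ℝ) / 2) * (U * (8 - 9 * V) + 7 * V - 6) *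
    (1 - U) ^ (-(3 : ℝ) / 2) * (1 - V) ^ (-(5 : ℝ) / 2)

lemma phi_sq (u v : ℝ) (hu0 : 0 < u) (hu1 : u < 1) (hv0 : 0 < v) (hv1 : v < 1) :
    PhiFun u v ^ 2 =
      u * v ^ 3 * (u * (8 - 9 * v) + 7 * v - 6) ^ 2 / ((1 - u) ^ 3 * (1 - v) ^ 5) := by
  have h1u : (0:ℝ) < 1 - u := by linarith
  have h1v : (0:ℝ) < 1 - v := by linarith
  unfold PhiFun
  rw [mul_pow, mul_pow, mul_pow, mul_pow, Real.sq_sqrt hu0.le]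
  rw [← Real.rpow_natCast (v ^ ((3:ℝ)/2)) 2, ← Real.rpow_mul hv0.le]
  rw [← Real.rpow_natCast ((1-u) ^ (-(3:ℝ)/2)) 2, ← Real.rpow_mul h1u.le]
  rw [← Real.rpow_natCast ((1-v) ^ (-(5:ℝ)/2)) 2, ← Real.rpow_mul h1v.le]
  norm_num
  have e1 : ((1:ℝ)-u) ^ (3:ℝ) = (1-u)^(3:ℕ) := by
    rw [← Real.rpow_natCast (1-u) 3]; norm_num
  have e2 : ((1:ℝ)-v) ^ (5:ℝ) = (1-v)^(5:ℕ) := by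
    rw [← Real.rpow_natCast (1-v) 5]; norm_num
  have e3 : (v:ℝ) ^ (3:ℝ) = v^(3:ℕ) := by
    rw [← Real.rpow_natCast v 3]; norm_num
  rw [div_eq_mul_inv, mul_inv, ← mul_assoc]

/-- For polytropic index `n₀ = 5` (`Υ₀ = 5/6`), `Φ` is a first
integral of the compactified Newtonian planar system: it is constant along every
solution with values in the open square `(0,1)²`. -/
theorem stmt5
    (U V : ℝ → ℝ)
    (hU : ∀ l : ℝ, HasDerivAt U
      (U l * (1 - U l) * ((1 - V l) * (3 - 4 * U l) - (5 / 6) * V l * (1 - U l))) l)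
    (hV : ∀ l : ℝ, HasDerivAt V
      (V l * (1 - V l) * ((2 * U l - 1) * (1 - V l) + (1 - 5 / 6) * V l * (1 - U l))) l)
    (hrange : ∀ l : ℝ, U l ∈ Ioo (0:ℝ) 1 ∧ V l ∈ Ioo (0:ℝ) 1) :
    ∀ l₁ l₂ : ℝ, PhiFun (U l₁) (V l₁) = PhiFun (U l₂) (V l₂) := by
  have hUc : Continuous U :=
    continuous_iff_continuousAt.mpr fun l => (hU l).differentiableAt.continuousAt
  have hVc : Continuous V :=
    continuous_iff_continuousAt.mpr fun l => (hV l).differentiableAt.continuousAt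
  -- the rational first integral F = Φ²
  set F : ℝ → ℝ := fun l =>
    U l * V l ^ 3 * (U l * (8 - 9 * V l) + 7 * V l - 6) ^ 2 /
      ((1 - U l) ^ 3 * (1 - V l) ^ 5) with hFdef
  have hFderiv : ∀ l, HasDerivAt F 0 l := by
    intro l
    obtain ⟨⟨hu0, hu1⟩, hv0, hv1⟩ := hrange l
    have h1u : (0:ℝ) < 1 - U l := by linarith
    have h1v : (0:ℝ) < 1 - V l := by linarith
    have hu := hU l
    have hv := hV l
    have h1 : HasDerivAt (fun l => 8 - 9 * V l)
        (-(9 * (V l * (1 - V l) * ((2 * U l - 1) * (1 - V l) + (1 - 5 / 6) * V l * (1 - U l))))) l :=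
      (hv.const_mul 9).const_sub 8
    have h2 := hu.mul h1
    have h3 := hv.const_mul 7
    have h4 := ((h2.add h3).sub_const 6)
    have h5 := h4.pow 2
    have h6 := hu.mul (hv.pow 3)
    have hN := h6.mul h5
    have h8 := (hu.const_sub 1).pow 3
    have h9 := (hv.const_sub 1).pow 5
    have hD := h8.mul h9
    have hDne : ((1 - U l) ^ 3 * (1 - V l) ^ 5) ≠ 0 := by positivity
    have hdiv := hN.div hD hDne
    refine hdiv.congr_deriv ?_
    simp only [Pi.mul_apply, Pi.pow_apply, Pi.add_apply, Pi.div_apply]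
    rw [div_eq_zero_iff]
    left
    ring
  have hFc : ∀ x y, F x = F y :=
    is_const_of_deriv_eq_zero (fun l => (hFderiv l).differentiableAt)
      (fun l => (hFderiv l).deriv)
  set f : ℝ → ℝ := fun l => PhiFun (U l) (V l) with hfdef
  have hsq : ∀ l, f l ^ 2 = F l := by
    intro l
    obtain ⟨⟨hu0, hu1⟩, hv0, hv1⟩ := hrange l
    exact phi_sq (U l) (V l) hu0 hu1 hv0 hv1
  have key2 : ∀ x y, f x ^ 2 = f y ^ 2 := by
    intro x y; rw [hsq, hsq, hFc x y]
  have cf : Continuous f := by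
    rw [continuous_iff_continuousAt]
    intro l
    obtain ⟨⟨hu0, hu1⟩, hv0, hv1⟩ := hrange l
    have h1u : (0:ℝ) < 1 - U l := by linarith
    have h1v : (0:ℝ) < 1 - V l := by linarith
    have c1 : ContinuousAt (fun l => Real.sqrt (U l)) l :=
      (Real.continuous_sqrt.comp hUc).continuousAt
    have c2 : ContinuousAt (fun l => V l ^ ((3:ℝ)/2)) l :=
      hVc.continuousAt.rpow_const (Or.inl hv0.ne')
    have c3 : ContinuousAt (fun l => (1 - U l) ^ (-(3:ℝ)/2)) l :=
      ((continuous_const.sub hUc).continuousAt).rpow_const (Or.inl h1u.ne')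
    have c4 : ContinuousAt (fun l => (1 - V l) ^ (-(5:ℝ)/2)) l :=
      ((continuous_const.sub hVc).continuousAt).rpow_const (Or.inl h1v.ne')
    have cP : ContinuousAt (fun l => U l * (8 - 9 * V l) + 7 * V l - 6) l := by
      have : Continuous (fun l => U l * (8 - 9 * V l) + 7 * V l - 6) := by continuity
      exact this.continuousAt
    have : ContinuousAt (fun l =>
        Real.sqrt (U l) * V l ^ ((3:ℝ)/2) * (U l * (8 - 9 * V l) + 7 * V l - 6) *
          (1 - U l) ^ (-(3:ℝ)/2) * (1 - V l) ^ (-(5:ℝ)/2)) l :=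
      (((c1.mul c2).mul cP).mul c3).mul c4
    exact this
  intro l₁ l₂
  by_cases h0 : f l₂ = 0
  · have h1 : f l₁ ^ 2 = 0 := by rw [key2 l₁ l₂, h0]; ring
    have : f l₁ = 0 := by
      have := sq_eq_zero_iff.mp (by rw [sq]; nlinarith [h1] : f l₁ ^ 2 = 0)
      exact this
    rw [show PhiFun (U l₁) (V l₁) = f l₁ from rfl,
        show PhiFun (U l₂) (V l₂) = f l₂ from rfl, this, h0]
  · have hfactor : (f l₁ - f l₂) * (f l₁ + f l₂) = 0 := by
      have := key2 l₁ l₂; nlinarith [this]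
    rcases mul_eq_zero.mp hfactor with h | h
    · have : f l₁ = f l₂ := by linarith
      exact this
    · -- f l₁ = -f l₂ : derive contradiction via IVT
      exfalso
      have hne : ∀ l, f l ≠ 0 := by
        intro l hl
        apply h0
        have := key2 l₂ l
        rw [hl] at this
        have h2 : f l₂ ^ 2 = 0 := by nlinarith [this]
        nlinarith [h2, sq_nonneg (f l₂)]
      have heq : f l₁ = -f l₂ := by linarith
      rcases le_total (f l₁) (f l₂) with hle | hle
      · have h02 : (0:ℝ) ∈ Icc (f l₁) (f l₂) := ⟨by linarith, by linarith⟩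
        obtain ⟨l₀, hl₀⟩ := intermediate_value_univ l₁ l₂ cf h02
        exact hne l₀ hl₀
      · have h02 : (0:ℝ) ∈ Icc (f l₂) (f l₁) := ⟨by linarith, by linarith⟩
        obtain ⟨l₀, hl₀⟩ := intermediate_value_univ l₂ l₁ cf h02
        exact hne l₀ hl₀
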